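/- The underlying random graph of an arc random digraph is an edge random graph: for n ≥ 2, 0 < p_a < 1, and every graph G with vertex set [n], Σ_{D : U(D) = G} p_a^{|A(D)|} (1−p_a)^{n(n−1)−|A(D)|} = p_e^{|E(G)|} (1−p_e)^{C(n,2)−|E(G)|}, where p_e = 2p_a − p_a². -/

import Mathlib

open Finset

lemma fiber2 {n : ℕ} (A : Finset (Fin n × Fin n)) :
    ∀ b ∈ A.image (fun p => s(p.1, p.2)), (A.filter fun p => s(p.1, p.2) = b).card ≤ 2 := by
  intro b hb
  obtain ⟨⟨u, v⟩, _, rfl⟩ := Finset.mem_image.mp hb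
  calc (A.filter fun p => s(p.1, p.2) = s(u, v)).card
      ≤ ({(u, v), (v, u)} : Finset (Fin n × Fin n)).card := by
        apply Finset.card_le_card
        intro ⟨p1, p2⟩ hp
        have := (Finset.mem_filter.mp hp).2
        rw [Sym2.eq_iff] at this
        rcases this with ⟨h1, h2⟩ | ⟨h1, h2⟩ <;> subst h1 <;> subst h2 <;> simp
    _ ≤ 2 := (Finset.card_insert_le _ _).trans (by simp)

lemma card_le2 {n : ℕ} {A : Finset (Fin n × Fin n)} {G : Finset (Sym2 (Fin n))}
    (h : A.image (fun p => s(p.1, p.2)) = G) : A.card ≤ 2 * G.card :=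
  h ▸ Finset.card_le_mul_card_image A 2 (fiber2 A)

lemma sub_pair {α} [DecidableEq α] {x y : α} {S : Finset α} (hS : S ⊆ {x, y})
    (hne : S.Nonempty) : S = {x} ∨ S = {y} ∨ S = {x, y} := by
  by_cases hx : x ∈ S <;> by_cases hy : y ∈ S
  · right; right
    exact Finset.Subset.antisymm hS (Finset.insert_subset hx (by simpa using hy))
  · left
    refine Finset.Subset.antisymm (fun z hz => ?_) (by simpa using hx)
    rcases Finset.mem_insert.mp (hS hz) with rfl | h
    · simp
    · rw [Finset.mem_singleton] at h; subst h; exact absurd hz hy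
  · right; left
    refine Finset.Subset.antisymm (fun z hz => ?_) (by simpa using hy)
    rcases Finset.mem_insert.mp (hS hz) with rfl | h
    · exact absurd hz hx
    · exact h
  · obtain ⟨z, hz⟩ := hne
    rcases Finset.mem_insert.mp (hS hz) with rfl | h
    · exact absurd hz hx
    · rw [Finset.mem_singleton] at h; subst h; exact absurd hz hy

lemma core {n : ℕ} (pa : ℝ) :
    ∀ G : Finset (Sym2 (Fin n)), (∀ e ∈ G, ¬ e.IsDiag) →
    ∑ A ∈ Finset.univ.filter (fun A : Finset (Fin n × Fin n) =>
        (∀ p ∈ A, p.1 ≠ p.2) ∧ A.image (fun p => s(p.1, p.2)) = G),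
      pa ^ A.card * (1 - pa) ^ (2 * G.card - A.card) = (2 * pa - pa ^ 2) ^ G.card := by
  intro G
  induction G using Finset.induction_on with
  | empty =>
    intro _
    have : Finset.univ.filter (fun A : Finset (Fin n × Fin n) =>
        (∀ p ∈ A, p.1 ≠ p.2) ∧ A.image (fun p => s(p.1, p.2)) = ∅) = {∅} := by
      ext A
      simp only [Finset.mem_filter, Finset.mem_univ, true_and, Finset.image_eq_empty,
        Finset.mem_singleton]
      exact ⟨fun h => h.2, fun h => ⟨by simp [h], h⟩⟩
    rw [this]
    simp
  | @insert e G' he IH =>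
    intro hG
    obtain ⟨a, b, rfl⟩ : ∃ a b, e = s(a, b) := by
      obtain ⟨p, hp⟩ := Quot.exists_rep e
      exact ⟨p.1, p.2, hp ▸ rfl⟩
    have hab : a ≠ b := by
      have := hG s(a, b) (Finset.mem_insert_self _ _)
      rwa [Sym2.mk_isDiag_iff] at this
    have hG' : ∀ x ∈ G', ¬ x.IsDiag := fun x hx => hG x (Finset.mem_insert_of_mem hx)
    set fib : Finset (Fin n × Fin n) := {(a, b), (b, a)} with hfib
    have hmkfib : ∀ p : Fin n × Fin n, p ∈ fib ↔ s(p.1, p.2) = s(a, b) := by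
      intro ⟨p1, p2⟩
      rw [hfib]
      constructor
      · intro hp
        rcases Finset.mem_insert.mp hp with h | h
        · rw [h]
        · rw [Finset.mem_singleton] at h; rw [h]; exact Sym2.eq_swap
      · intro hp
        rw [Sym2.eq_iff] at hp
        rcases hp with ⟨rfl, rfl⟩ | ⟨rfl, rfl⟩ <;> simp
    set T : Finset (Finset (Fin n × Fin n)) := {{(a, b)}, {(b, a)}, {(a, b), (b, a)}} with hT
    set Q := Finset.univ.filter (fun A : Finset (Fin n × Fin n) =>
        (∀ p ∈ A, p.1 ≠ p.2) ∧ A.image (fun p => s(p.1, p.2)) = G') with hQ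
    -- facts about members of T
    have hTsub : ∀ S ∈ T, S ⊆ fib ∧ S.Nonempty := by
      intro S hS
      rw [hT] at hS
      rcases Finset.mem_insert.mp hS with rfl | hS
      · exact ⟨by intro z hz; simp at hz; simp [hfib, hz], ⟨_, Finset.mem_singleton_self _⟩⟩
      rcases Finset.mem_insert.mp hS with rfl | hS
      · exact ⟨by intro z hz; simp at hz; simp [hfib, hz], ⟨_, Finset.mem_singleton_self _⟩⟩
      rw [Finset.mem_singleton] at hS; subst hS
      exact ⟨le_refl _, ⟨_, Finset.mem_insert_self _ _⟩⟩
    have hQfib : ∀ A' ∈ Q, Disjoint A' fib := by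
      intro A' hA'
      obtain ⟨-, himg⟩ := (Finset.mem_filter.mp hA').2.imp id id
      rw [Finset.disjoint_left]
      intro p hpA hpf
      have : s(p.1, p.2) ∈ G' := himg ▸ Finset.mem_image_of_mem _ hpA
      rw [(hmkfib p).mp hpf] at this
      exact he this
    -- the bijection
    rw [Finset.sum_nbij' (i := fun A => (A ∩ fib, A \ fib)) (j := fun z => z.1 ∪ z.2)
      (s := Finset.univ.filter (fun A : Finset (Fin n × Fin n) =>
        (∀ p ∈ A, p.1 ≠ p.2) ∧ A.image (fun p => s(p.1, p.2)) = insert s(a, b) G'))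
      (t := T ×ˢ Q)
      (f := fun A => pa ^ A.card * (1 - pa) ^ (2 * (insert s(a, b) G').card - A.card))
      (g := fun z => pa ^ (z.1 ∪ z.2).card *
        (1 - pa) ^ (2 * (insert s(a, b) G').card - (z.1 ∪ z.2).card))
      ?_ ?_ ?_ ?_ ?_]
    · -- main computation over the product
      have hcard : (insert s(a, b) G').card = G'.card + 1 := Finset.card_insert_of_notMem he
      have habne : ((a, b) : Fin n × Fin n) ≠ (b, a) := fun h => hab (Prod.ext_iff.mp h).1
      rw [Finset.sum_product]
      have key : ∀ S ∈ T, ∀ A' ∈ Q,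
          pa ^ (S ∪ A').card * (1 - pa) ^ (2 * (insert s(a, b) G').card - (S ∪ A').card)
          = (pa ^ S.card * (1 - pa) ^ (2 - S.card)) *
            (pa ^ A'.card * (1 - pa) ^ (2 * G'.card - A'.card)) := by
        intro S hS A' hA'
        have hdisj : Disjoint S A' := (hQfib A' hA').symm.mono_left (hTsub S hS).1
        have hcardU : (S ∪ A').card = S.card + A'.card := Finset.card_union_of_disjoint hdisj
        have hsle : S.card ≤ 2 := le_trans (Finset.card_le_card (hTsub S hS).1)
          (by rw [hfib]; exact (Finset.card_insert_le _ _).trans (by simp))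
        have hale : A'.card ≤ 2 * G'.card := card_le2 (Finset.mem_filter.mp hA').2.2
        have hexp : 2 * (insert s(a, b) G').card - (S.card + A'.card)
            = (2 - S.card) + (2 * G'.card - A'.card) := by rw [hcard]; omega
        rw [hcardU, hexp, pow_add, pow_add]; ring
      have hpaircard : ({(a, b), (b, a)} : Finset (Fin n × Fin n)).card = 2 := by
        rw [Finset.card_insert_of_notMem (by simp [habne]), Finset.card_singleton]
      have h12 : ({(a, b)} : Finset (Fin n × Fin n)) ≠ {(b, a)} := by simp [habne]
      have h13 : ({(a, b)} : Finset (Fin n × Fin n)) ≠ {(a, b), (b, a)} := fun h => by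
        have := congrArg Finset.card h
        rw [hpaircard, Finset.card_singleton] at this; omega
      have h23 : ({(b, a)} : Finset (Fin n × Fin n)) ≠ {(a, b), (b, a)} := fun h => by
        have := congrArg Finset.card h
        rw [hpaircard, Finset.card_singleton] at this; omega
      have hTsum : ∑ S ∈ T, pa ^ S.card * (1 - pa) ^ (2 - S.card) = 2 * pa - pa ^ 2 := by
        have hnot1 : ({(a, b)} : Finset (Fin n × Fin n)) ∉
            ({{(b, a)}, {(a, b), (b, a)}} : Finset (Finset (Fin n × Fin n))) := by
          simp only [Finset.mem_insert, Finset.mem_singleton]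
          push_neg
          exact ⟨h12, h13⟩
        rw [hT, Finset.sum_insert hnot1, Finset.sum_insert (by simpa using h23),
          Finset.sum_singleton, Finset.card_singleton, Finset.card_singleton, hpaircard]
        norm_num
        ring
      rw [Finset.sum_congr rfl fun S hS => Finset.sum_congr rfl fun A' hA' => key S hS A' hA']
      rw [← Finset.sum_mul_sum, IH hG', hcard, hTsum, pow_succ]
      exact mul_comm _ _
    · -- maps to
      intro A hA
      obtain ⟨hne, himg⟩ := (Finset.mem_filter.mp hA).2
      rw [Finset.mem_product]
      constructor
      · -- A ∩ fib ∈ T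
        have hsub : A ∩ fib ⊆ fib := Finset.inter_subset_right
        have hnonempty : (A ∩ fib).Nonempty := by
          have : s(a, b) ∈ A.image (fun p => s(p.1, p.2)) := himg ▸ Finset.mem_insert_self _ _
          obtain ⟨p, hpA, hpe⟩ := Finset.mem_image.mp this
          exact ⟨p, Finset.mem_inter.mpr ⟨hpA, (hmkfib p).mpr hpe⟩⟩
        have := sub_pair (x := (a,b)) (y := (b,a)) (hfib ▸ hsub) hnonempty
        rw [hT]
        rcases this with h | h | h <;> simp [h]
      · -- A \ fib ∈ Q
        rw [hQ, Finset.mem_filter]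
        refine ⟨Finset.mem_univ _, fun p hp => hne p (Finset.mem_sdiff.mp hp).1, ?_⟩
        ext x
        constructor
        · intro hx
          obtain ⟨p, hp, rfl⟩ := Finset.mem_image.mp hx
          obtain ⟨hpA, hpnf⟩ := Finset.mem_sdiff.mp hp
          have : s(p.1, p.2) ∈ insert s(a, b) G' := himg ▸ Finset.mem_image_of_mem _ hpA
          rcases Finset.mem_insert.mp this with h | h
          · exact absurd ((hmkfib p).mpr h) hpnf
          · exact h
        · intro hx
          have : x ∈ A.image (fun p => s(p.1, p.2)) := himg ▸ Finset.mem_insert_of_mem hx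
          obtain ⟨p, hpA, rfl⟩ := Finset.mem_image.mp this
          refine Finset.mem_image_of_mem _ (Finset.mem_sdiff.mpr ⟨hpA, fun hpf => ?_⟩)
          exact he ((hmkfib p).mp hpf ▸ hx)
    · -- j maps to
      intro z hz
      obtain ⟨S, A'⟩ := z
      rw [Finset.mem_product] at hz
      obtain ⟨hS, hA'⟩ := hz
      dsimp only at hS hA' ⊢
      obtain ⟨hSfib, -⟩ := hTsub S hS
      obtain ⟨hne', himg'⟩ := (Finset.mem_filter.mp hA').2
      rw [Finset.mem_filter]
      refine ⟨Finset.mem_univ _, fun p hp => ?_, ?_⟩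
      · rcases Finset.mem_union.mp hp with h | h
        · have := (hmkfib p).mp (hSfib h)
          rw [Sym2.eq_iff] at this
          rcases this with ⟨rfl, rfl⟩ | ⟨rfl, rfl⟩
          · exact hab
          · exact hab.symm
        · exact hne' p h
      · have himgS : S.image (fun p => s(p.1, p.2)) = {s(a, b)} := by
          apply Finset.Subset.antisymm
          · intro x hx
            obtain ⟨p, hp, rfl⟩ := Finset.mem_image.mp hx
            simp [(hmkfib p).mp (hSfib hp)]
          · intro x hx
            rw [Finset.mem_singleton] at hx; subst hx
            obtain ⟨-, ⟨p, hp⟩⟩ := hTsub S hS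
            exact Finset.mem_image.mpr ⟨p, hp, (hmkfib p).mp (hSfib hp)⟩
        rw [Finset.image_union, himgS, himg', ← Finset.insert_eq]
    · -- left inverse
      intro A hA
      show A ∩ fib ∪ A \ fib = A
      rw [Finset.union_comm, Finset.sdiff_union_inter]
    · -- right inverse
      intro ⟨S, A'⟩ hz
      rw [Finset.mem_product] at hz
      obtain ⟨hS, hA'⟩ := hz
      obtain ⟨hSfib, -⟩ := hTsub S hS
      have hdisj := hQfib A' hA'
      have h1 : (S ∪ A') ∩ fib = S := by
        rw [Finset.union_inter_distrib_right, Finset.inter_eq_left.mpr hSfib,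
          (Finset.disjoint_iff_inter_eq_empty.mp hdisj), Finset.union_empty]
      have h2 : (S ∪ A') \ fib = A' := by
        rw [Finset.union_sdiff_distrib, Finset.sdiff_eq_empty_iff_subset.mpr hSfib,
          Finset.sdiff_eq_self_of_disjoint hdisj, Finset.empty_union]
      simp [h1, h2]
    · intro A hA
      have h : A ∩ fib ∪ A \ fib = A := by rw [Finset.union_comm, Finset.sdiff_union_inter]
      simp only [h]

/-- The underlying random graph of the arc random digraph `D(n, p_a)` is the edge random
graph `G(n, p_e)` with `p_e = 2p_a - p_a²`: for every loopless graph `G` on `[n]`, summing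
the ARD probabilities over all digraphs whose underlying graph is `G` gives the ERG
probability of `G`. -/
theorem stmt15 {n : ℕ} (hn : 2 ≤ n) {pa : ℝ} (hpa0 : 0 < pa) (hpa1 : pa < 1)
    (G : Finset (Sym2 (Fin n))) (hG : ∀ e ∈ G, ¬ e.IsDiag) :
    ∑ A ∈ Finset.univ.filter (fun A : Finset (Fin n × Fin n) =>
        (∀ p ∈ A, p.1 ≠ p.2) ∧ A.image (fun p => s(p.1, p.2)) = G),
      pa ^ A.card * (1 - pa) ^ (n * (n - 1) - A.card) =
    (2 * pa - pa ^ 2) ^ G.card * (1 - (2 * pa - pa ^ 2)) ^ (n.choose 2 - G.card) := by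
  classical
  set Ω : Finset (Fin n × Fin n) := Finset.univ.filter (fun p => p.1 ≠ p.2) with hΩ
  have hΩeq : Ω = (Finset.univ : Finset (Fin n)).offDiag := by
    ext p; simp [hΩ, Finset.mem_offDiag]
  have hnn : n * n = n * (n - 1) + n := by
    cases n with
    | zero => simp
    | succ m => rw [Nat.succ_sub_one]; ring
  have hΩcard : Ω.card = n * (n - 1) := by
    rw [hΩeq, Finset.offDiag_card, Finset.card_univ, Fintype.card_fin, hnn,
      Nat.add_sub_cancel]
  have hdvd : 2 ∣ n * (n - 1) := by
    have he : Even ((n - 1) * (n - 1 + 1)) := Nat.even_mul_succ_self (n - 1)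
    rw [Nat.sub_add_cancel (by omega : 1 ≤ n)] at he
    rw [mul_comm]
    exact he.two_dvd
  have hM2C : n * (n - 1) = 2 * n.choose 2 := by
    rw [Nat.choose_two_right, Nat.mul_div_cancel' hdvd]
  -- G.card ≤ n.choose 2
  have hGsub : G ⊆ Ω.image (fun p => s(p.1, p.2)) := by
    intro e heG
    obtain ⟨a, b, rfl⟩ : ∃ a b, e = s(a, b) := by
      obtain ⟨p, hp⟩ := Quot.exists_rep e
      exact ⟨p.1, p.2, hp ▸ rfl⟩
    have hab : a ≠ b := by have := hG _ heG; rwa [Sym2.mk_isDiag_iff] at this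
    exact Finset.mem_image.mpr ⟨(a, b), by simp [hΩ, hab], rfl⟩
  have himgle : 2 * (Ω.image (fun p => s(p.1, p.2))).card ≤ Ω.card := by
    apply Finset.mul_card_image_le_card Ω 2
    intro b hb
    obtain ⟨⟨u, v⟩, huv, rfl⟩ := Finset.mem_image.mp hb
    have huvne : u ≠ v := by simpa [hΩ] using huv
    have hsub : ({(u, v), (v, u)} : Finset (Fin n × Fin n)) ⊆
        Ω.filter (fun p => s(p.1, p.2) = s(u, v)) := by
      intro p hp
      rcases Finset.mem_insert.mp hp with rfl | hp
      · exact Finset.mem_filter.mpr ⟨huv, rfl⟩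
      · rw [Finset.mem_singleton] at hp; subst hp
        exact Finset.mem_filter.mpr ⟨by simp [hΩ, huvne.symm], Sym2.eq_swap⟩
    calc (2 : ℕ) = ({(u, v), (v, u)} : Finset (Fin n × Fin n)).card := by
          rw [Finset.card_insert_of_notMem (by simp [huvne]), Finset.card_singleton]
      _ ≤ _ := Finset.card_le_card hsub
  have hGle : G.card ≤ n.choose 2 := by
    have h1 : G.card ≤ (Ω.image (fun p => s(p.1, p.2))).card := Finset.card_le_card hGsub
    omega
  have h2m : 2 * G.card ≤ n * (n - 1) := by omega
  -- rewrite each term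
  have hstep : ∀ A ∈ Finset.univ.filter (fun A : Finset (Fin n × Fin n) =>
      (∀ p ∈ A, p.1 ≠ p.2) ∧ A.image (fun p => s(p.1, p.2)) = G),
      pa ^ A.card * (1 - pa) ^ (n * (n - 1) - A.card)
      = (pa ^ A.card * (1 - pa) ^ (2 * G.card - A.card)) *
        (1 - pa) ^ (n * (n - 1) - 2 * G.card) := by
    intro A hA
    have hAle : A.card ≤ 2 * G.card := card_le2 (Finset.mem_filter.mp hA).2.2
    rw [show n * (n - 1) - A.card
        = (2 * G.card - A.card) + (n * (n - 1) - 2 * G.card) by omega, pow_add]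
    ring
  rw [Finset.sum_congr rfl hstep, ← Finset.sum_mul, core pa G hG,
    show n * (n - 1) - 2 * G.card = 2 * (n.choose 2 - G.card) by omega, pow_mul,
    show (1 - pa) ^ 2 = 1 - (2 * pa - pa ^ 2) by ring]
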